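/- Let p⁽¹⁾, p⁽²⁾, p⁽³⁾, p⁽⁴⁾ ∈ ℂ² ∖ {0} be pairwise linearly independent vectors. Let A₁ and A₂ denote the spaces of homogeneous polynomials in ℂ[x₁, x₂] of degrees 1 and 2 respectively (so dim A₁ = 2 and dim A₂ = 3), and let evᵢ : A₂ → ℂ denote evaluation at p⁽ⁱ⁾. Then for all subspaces U₁ ⊆ A₁, U₀ ⊆ A₂ and Sᵢ ⊆ ℂ (i = 1, …, 4) satisfying x₁·U₁ ⊆ U₀, x₂·U₁ ⊆ U₀, evᵢ(U₀) ⊆ Sᵢ for all i, and U₁ ≠ A₁, one has dim U₁ + dim U₀ ≤ ∑_{i=1}^{4} dim Sᵢ. -/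

import Mathlib

open MvPolynomial

private lemma fsdeg (d : Fin 2 →₀ ℕ) : d.degree = d 0 + d 1 := by
  rw [Finsupp.degree_apply, Finset.sum_subset (Finset.subset_univ _), Fin.sum_univ_two]
  intro i _ h
  simpa using h

private lemma fs_eq (d : Fin 2 →₀ ℕ) (a b : ℕ) (h0 : d 0 = a) (h1 : d 1 = b) :
    d = Finsupp.single 0 a + Finsupp.single 1 b := by
  ext i
  fin_cases i <;> simp [Finsupp.single_apply, h0, h1]

private lemma fs_ne {i j : Fin 2} {a b : ℕ} (k : Fin 2)
    (h : (Finsupp.single i a) k ≠ (Finsupp.single j b) k) :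
    Finsupp.single i a ≠ Finsupp.single j b := fun hc => h (by rw [hc])

private lemma cross_ne {v w : ℂ × ℂ} (h : LinearIndependent ℂ ![v, w]) :
    v.1 * w.2 - w.1 * v.2 ≠ 0 := by
  intro hd
  rw [LinearIndependent.pair_iff] at h
  have h1 := h w.2 (-v.2) (by
    refine Prod.ext ?_ ?_ <;>
      simp only [Prod.smul_fst, Prod.smul_snd, Prod.fst_add, Prod.snd_add, smul_eq_mul,
        Prod.fst_zero, Prod.snd_zero]
    · linear_combination hd
    · ring)
  have h2 := h w.1 (-v.1) (by
    refine Prod.ext ?_ ?_ <;>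
      simp only [Prod.smul_fst, Prod.smul_snd, Prod.fst_add, Prod.snd_add, smul_eq_mul,
        Prod.fst_zero, Prod.snd_zero]
    · ring
    · linear_combination -hd)
  have h3 := (h 1 0 (by
    have hv : v = 0 := Prod.ext (by simpa using h2.2) (by simpa using h1.2)
    simp [hv])).1
  exact one_ne_zero h3

private lemma top_of_mem {S : Submodule ℂ ℂ} {x : ℂ} (hx : x ∈ S) (h0 : x ≠ 0) : S = ⊤ := by
  rw [eq_top_iff]
  intro y _
  have := S.smul_mem (y * x⁻¹) hx
  rwa [smul_eq_mul, mul_assoc, inv_mul_cancel₀ h0, mul_one] at this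

private lemma hom1_repr {f : MvPolynomial (Fin 2) ℂ} (hf : f.IsHomogeneous 1) :
    ∃ a b : ℂ, f = monomial (Finsupp.single 0 1) a + monomial (Finsupp.single 1 1) b := by
  refine ⟨coeff (Finsupp.single 0 1) f, coeff (Finsupp.single 1 1) f, ?_⟩
  apply MvPolynomial.ext
  intro d
  rw [coeff_add, coeff_monomial, coeff_monomial]
  by_cases h : d.degree = 1
  · rw [fsdeg] at h
    rcases (by omega : d 0 = 1 ∧ d 1 = 0 ∨ d 0 = 0 ∧ d 1 = 1) with ⟨h0, h1⟩ | ⟨h0, h1⟩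
    · have hd : d = Finsupp.single 0 1 := by simpa using fs_eq d 1 0 h0 h1
      subst hd
      rw [if_pos rfl, if_neg (Ne.symm (fs_ne 0 (by simp [Finsupp.single_apply])))]
      simp
    · have hd : d = Finsupp.single 1 1 := by simpa using fs_eq d 0 1 h0 h1
      subst hd
      rw [if_pos rfl, if_neg (fs_ne 0 (by simp [Finsupp.single_apply]))]
      simp
  · rw [hf.coeff_eq_zero h, if_neg, if_neg, add_zero]
    · intro hc; apply h; rw [← hc, fsdeg]; simp [Finsupp.single_apply]
    · intro hc; apply h; rw [← hc, fsdeg]; simp [Finsupp.single_apply]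

private lemma hom2_repr {f : MvPolynomial (Fin 2) ℂ} (hf : f.IsHomogeneous 2) :
    ∃ a b c : ℂ, f = monomial (Finsupp.single 0 2) a
      + monomial (Finsupp.single 0 1 + Finsupp.single 1 1) b
      + monomial (Finsupp.single 1 2) c := by
  refine ⟨coeff (Finsupp.single 0 2) f, coeff (Finsupp.single 0 1 + Finsupp.single 1 1) f,
    coeff (Finsupp.single 1 2) f, ?_⟩
  apply MvPolynomial.ext
  intro d
  rw [coeff_add, coeff_add, coeff_monomial, coeff_monomial, coeff_monomial]
  have hval : ∀ (m : Fin 2 →₀ ℕ) (k : Fin 2), m = d → m k = d k := fun m k h => by rw [h]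
  by_cases h : d.degree = 2
  · rw [fsdeg] at h
    rcases (by omega : d 0 = 2 ∧ d 1 = 0 ∨ (d 0 = 1 ∧ d 1 = 1) ∨ (d 0 = 0 ∧ d 1 = 2))
      with ⟨h0, h1⟩ | ⟨h0, h1⟩ | ⟨h0, h1⟩
    · have hd : d = Finsupp.single 0 2 := by simpa using fs_eq d 2 0 h0 h1
      subst hd
      rw [if_pos rfl, if_neg (fun hc => by simpa [Finsupp.single_apply] using hval _ 0 hc),
        if_neg (fun hc => by simpa [Finsupp.single_apply] using hval _ 0 hc)]
      simp
    · have hd : d = Finsupp.single 0 1 + Finsupp.single 1 1 := fs_eq d 1 1 h0 h1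
      subst hd
      rw [if_pos rfl, if_neg (fun hc => by simpa [Finsupp.single_apply] using hval _ 0 hc),
        if_neg (fun hc => by simpa [Finsupp.single_apply] using hval _ 0 hc)]
      simp
    · have hd : d = Finsupp.single 1 2 := by simpa using fs_eq d 0 2 h0 h1
      subst hd
      rw [if_pos rfl, if_neg (fun hc => by simpa [Finsupp.single_apply] using hval _ 0 hc),
        if_neg (fun hc => by simpa [Finsupp.single_apply] using hval _ 0 hc)]
      simp
  · rw [hf.coeff_eq_zero h, if_neg, if_neg, if_neg, add_zero, add_zero]
    · intro hc; apply h; rw [← hc, fsdeg]; simp [Finsupp.single_apply]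
    · intro hc; apply h; rw [← hc, fsdeg]; simp [Finsupp.single_apply]
    · intro hc; apply h; rw [← hc, fsdeg]; simp [Finsupp.single_apply]

private lemma prod_pair (g : Fin 2 → ℂ) :
    ((Finsupp.single (0 : Fin 2) 1 + Finsupp.single 1 1)).prod (fun n e => g n ^ e)
      = g 0 * g 1 := by
  rw [Finsupp.prod_add_index (by simp) (fun a _ b1 b2 => pow_add _ b1 b2)]
  simp

private lemma lin_zero {f : MvPolynomial (Fin 2) ℂ} (hf : f.IsHomogeneous 1) {q r : ℂ × ℂ}
    (hqr : q.1 * r.2 - r.1 * q.2 ≠ 0)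
    (h1 : eval ![q.1, q.2] f = 0) (h2 : eval ![r.1, r.2] f = 0) : f = 0 := by
  obtain ⟨a, b, rfl⟩ := hom1_repr hf
  simp only [eval_add, eval_monomial, Finsupp.prod_single_index, pow_one, pow_zero,
    Matrix.cons_val_zero, Matrix.cons_val_one, Matrix.head_cons] at h1 h2
  have ha : a * (q.1 * r.2 - r.1 * q.2) = 0 := by linear_combination r.2 * h1 - q.2 * h2
  have hb : b * (q.1 * r.2 - r.1 * q.2) = 0 := by linear_combination -r.1 * h1 + q.1 * h2
  rw [(mul_eq_zero.mp ha).resolve_right hqr, (mul_eq_zero.mp hb).resolve_right hqr]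
  simp

private lemma quad_zero {f : MvPolynomial (Fin 2) ℂ} (hf : f.IsHomogeneous 2) {q r w : ℂ × ℂ}
    (hqr : q.1 * r.2 - r.1 * q.2 ≠ 0) (hqw : q.1 * w.2 - w.1 * q.2 ≠ 0)
    (hrw : r.1 * w.2 - w.1 * r.2 ≠ 0)
    (h1 : eval ![q.1, q.2] f = 0) (h2 : eval ![r.1, r.2] f = 0)
    (h3 : eval ![w.1, w.2] f = 0) : f = 0 := by
  obtain ⟨a, b, c, rfl⟩ := hom2_repr hf
  simp only [eval_add, eval_monomial, prod_pair, Finsupp.prod_single_index, pow_one, pow_zero,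
    Matrix.cons_val_zero, Matrix.cons_val_one, Matrix.head_cons] at h1 h2 h3
  set s1 := q.1; set t1 := q.2; set s2 := r.1; set t2 := r.2; set s3 := w.1; set t3 := w.2
  have hD : (s1 * t2 - s2 * t1) * ((s1 * t3 - s3 * t1) * (s2 * t3 - s3 * t2)) ≠ 0 :=
    mul_ne_zero hqr (mul_ne_zero hqw hrw)
  have ha : a * ((s1 * t2 - s2 * t1) * ((s1 * t3 - s3 * t1) * (s2 * t3 - s3 * t2))) = 0 := by
    linear_combination (t2 * t3 * (s2 * t3 - s3 * t2)) * h1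
      - (t1 * t3 * (s1 * t3 - s3 * t1)) * h2 + (t1 * t2 * (s1 * t2 - s2 * t1)) * h3
  have hb : b * ((s1 * t2 - s2 * t1) * ((s1 * t3 - s3 * t1) * (s2 * t3 - s3 * t2))) = 0 := by
    linear_combination (-(s2 * t3 + s3 * t2) * (s2 * t3 - s3 * t2)) * h1
      + ((s1 * t3 + s3 * t1) * (s1 * t3 - s3 * t1)) * h2
      - ((s1 * t2 + s2 * t1) * (s1 * t2 - s2 * t1)) * h3
  have hc : c * ((s1 * t2 - s2 * t1) * ((s1 * t3 - s3 * t1) * (s2 * t3 - s3 * t2))) = 0 := by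
    linear_combination (s2 * s3 * (s2 * t3 - s3 * t2)) * h1
      - (s1 * s3 * (s1 * t3 - s3 * t1)) * h2 + (s1 * s2 * (s1 * t2 - s2 * t1)) * h3
  rw [(mul_eq_zero.mp ha).resolve_right hD, (mul_eq_zero.mp hb).resolve_right hD,
    (mul_eq_zero.mp hc).resolve_right hD]
  simp

/-- Evaluation at a point, as a linear map. -/
private noncomputable def evL (g : Fin 2 → ℂ) : MvPolynomial (Fin 2) ℂ →ₗ[ℂ] ℂ where
  toFun := eval g
  map_add' f1 f2 := by simp
  map_smul' r f := by simp [smul_eval]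

@[simp] private lemma evL_apply (g : Fin 2 → ℂ) (f : MvPolynomial (Fin 2) ℂ) :
    evL g f = eval g f := rfl

private lemma hom1_span :
    homogeneousSubmodule (Fin 2) ℂ 1 = Submodule.span ℂ {X 0, X 1} := by
  apply le_antisymm
  · intro f hf
    obtain ⟨a, b, rfl⟩ := hom1_repr ((mem_homogeneousSubmodule _ _).mp hf)
    rw [Submodule.mem_span_pair]
    exact ⟨a, b, by simp [X, smul_monomial]⟩
  · rw [Submodule.span_le]
    rintro x hx
    rcases hx with rfl | rfl <;> exact isHomogeneous_X _ _

private lemma X_li : LinearIndependent ℂ ![(X 0 : MvPolynomial (Fin 2) ℂ), X 1] := by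
  rw [LinearIndependent.pair_iff]
  intro s t hst
  have hne10 : (Finsupp.single (1 : Fin 2) 1) ≠ Finsupp.single 0 1 :=
    fs_ne 0 (by simp [Finsupp.single_apply])
  have hne01 : (Finsupp.single (0 : Fin 2) 1) ≠ Finsupp.single 1 1 :=
    fs_ne 0 (by simp [Finsupp.single_apply])
  have h0 := congrArg (coeff (Finsupp.single 0 1)) hst
  have h1 := congrArg (coeff (Finsupp.single 1 1)) hst
  simp [coeff_smul, coeff_X', hne10, hne01] at h0 h1
  exact ⟨h0, h1⟩

theorem stmt_13 (p : Fin 4 → ℂ × ℂ)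
    (hp : ∀ i j, i ≠ j → LinearIndependent ℂ ![p i, p j])
    (U₁ U₀ : Submodule ℂ (MvPolynomial (Fin 2) ℂ))
    (S : Fin 4 → Submodule ℂ ℂ)
    (hU₁ : U₁ ≤ homogeneousSubmodule (Fin 2) ℂ 1)
    (hU₀ : U₀ ≤ homogeneousSubmodule (Fin 2) ℂ 2)
    (hx₁ : ∀ f ∈ U₁, X 0 * f ∈ U₀)
    (hx₂ : ∀ f ∈ U₁, X 1 * f ∈ U₀)
    (hev : ∀ i : Fin 4, ∀ f ∈ U₀, eval ![(p i).1, (p i).2] f ∈ S i)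
    (hne : U₁ ≠ homogeneousSubmodule (Fin 2) ℂ 1) :
    Module.finrank ℂ U₁ + Module.finrank ℂ U₀ ≤ ∑ i, Module.finrank ℂ (S i) := by
  have key3 : ∀ i j k : Fin 4, i ≠ j → i ≠ k → j ≠ k →
      ∀ f ∈ U₀, eval ![(p i).1, (p i).2] f = 0 → eval ![(p j).1, (p j).2] f = 0 →
      eval ![(p k).1, (p k).2] f = 0 → f = 0 := by
    intro i j k hij hik hjk f hf e1 e2 e3
    exact quad_zero ((mem_homogeneousSubmodule _ _).mp (hU₀ hf))
      (cross_ne (hp i j hij)) (cross_ne (hp i k hik)) (cross_ne (hp j k hjk)) e1 e2 e3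
  have hcross : ∀ i j : Fin 4, i ≠ j → (p i).1 * (p j).2 - (p j).1 * (p i).2 ≠ 0 :=
    fun i j h => cross_ne (hp i j h)
  have hpne : ∀ i : Fin 4, ¬((p i).1 = 0 ∧ (p i).2 = 0) := by
    intro i hc
    obtain ⟨j, hj⟩ : ∃ j, i ≠ j := by fin_cases i <;> decide
    apply hcross i j hj
    rw [hc.1, hc.2]
    ring
  have bound3 : ∀ i j k : Fin 4, i ≠ j → i ≠ k → j ≠ k → Module.finrank ℂ U₀ ≤ 3 := by
    intro i j k hij hik hjk
    set φ := ((evL ![(p i).1, (p i).2]).comp U₀.subtype).prod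
      (((evL ![(p j).1, (p j).2]).comp U₀.subtype).prod
        ((evL ![(p k).1, (p k).2]).comp U₀.subtype)) with hφ
    have hinj : Function.Injective φ := by
      rw [← LinearMap.ker_eq_bot, Submodule.eq_bot_iff]
      rintro ⟨f, hf⟩ hker
      rw [LinearMap.mem_ker, hφ] at hker
      simp only [LinearMap.prod_apply, Function.prod, LinearMap.comp_apply, Submodule.coe_subtype,
        evL_apply, Prod.mk_eq_zero] at hker
      obtain ⟨e1, e2, e3⟩ := hker
      exact Subtype.ext (key3 i j k hij hik hjk f hf e1 e2 e3)
    have hle := LinearMap.finrank_le_finrank_of_injective hinj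
    simpa [Module.finrank_prod] using hle
  have bound2 : ∀ i j k : Fin 4, i ≠ j → i ≠ k → j ≠ k →
      (∀ f ∈ U₀, eval ![(p k).1, (p k).2] f = 0) → Module.finrank ℂ U₀ ≤ 2 := by
    intro i j k hij hik hjk hz
    set φ := ((evL ![(p i).1, (p i).2]).comp U₀.subtype).prod
      ((evL ![(p j).1, (p j).2]).comp U₀.subtype) with hφ
    have hinj : Function.Injective φ := by
      rw [← LinearMap.ker_eq_bot, Submodule.eq_bot_iff]
      rintro ⟨f, hf⟩ hker
      rw [LinearMap.mem_ker, hφ] at hker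
      simp only [LinearMap.prod_apply, Function.prod, LinearMap.comp_apply, Submodule.coe_subtype,
        evL_apply, Prod.mk_eq_zero] at hker
      obtain ⟨e1, e2⟩ := hker
      exact Subtype.ext (key3 i j k hij hik hjk f hf e1 e2 (hz f hf))
    have hle := LinearMap.finrank_le_finrank_of_injective hinj
    simpa [Module.finrank_prod] using hle
  by_cases hU1 : U₁ = ⊥
  · rw [hU1, finrank_bot, zero_add]
    have hSfin : ∀ i : Fin 4, FiniteDimensional ℂ (S i) := fun i => inferInstance
    set c : ∀ i : Fin 4, (↥U₀ →ₗ[ℂ] ↥(S i)) := fun i =>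
      LinearMap.codRestrict (S i) ((evL ![(p i).1, (p i).2]).comp U₀.subtype)
        (fun f => hev i f.1 f.2) with hc
    set Φ := (c 0).prod ((c 1).prod ((c 2).prod (c 3))) with hΦ
    have hinj : Function.Injective Φ := by
      rw [← LinearMap.ker_eq_bot, Submodule.eq_bot_iff]
      rintro ⟨f, hf⟩ hker
      rw [LinearMap.mem_ker, hΦ] at hker
      simp only [LinearMap.prod_apply, Function.prod, Prod.mk_eq_zero] at hker
      obtain ⟨e1, e2, e3, e4⟩ := hker
      have g1 : eval ![(p 0).1, (p 0).2] f = 0 := by exact congrArg Subtype.val e1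
      have g2 : eval ![(p 1).1, (p 1).2] f = 0 := by exact congrArg Subtype.val e2
      have g3 : eval ![(p 2).1, (p 2).2] f = 0 := by exact congrArg Subtype.val e3
      exact Subtype.ext (key3 0 1 2 (by decide) (by decide) (by decide) f hf g1 g2 g3)
    have hle := LinearMap.finrank_le_finrank_of_injective hinj
    have hrk : Module.finrank ℂ (↥(S 0) × ↥(S 1) × ↥(S 2) × ↥(S 3))
        = ∑ i, Module.finrank ℂ (S i) := by
      rw [Fin.sum_univ_four]
      simp only [Module.finrank_prod]
      omega
    omega
  · obtain ⟨ℓ, hℓU, hℓ0⟩ := (Submodule.ne_bot_iff U₁).mp hU1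
    have hℓhom := (mem_homogeneousSubmodule _ _).mp (hU₁ hℓU)
    have hU1le : Module.finrank ℂ U₁ ≤ 1 := by
      have hfd : FiniteDimensional ℂ (homogeneousSubmodule (Fin 2) ℂ 1) := by
        rw [hom1_span]
        exact FiniteDimensional.span_of_finite ℂ (Set.toFinite _)
      have hr : Module.finrank ℂ (homogeneousSubmodule (Fin 2) ℂ 1) = 2 := by
        rw [hom1_span]
        have hs : ({X 0, X 1} : Set (MvPolynomial (Fin 2) ℂ))
            = Set.range ![X 0, X 1] := by
          simp [Matrix.range_cons, Matrix.range_empty]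
          exact Set.pair_comm _ _
        rw [hs, finrank_span_eq_card X_li]
        simp
      have := Submodule.finrank_lt_finrank_of_lt (lt_of_le_of_ne hU₁ hne)
      omega
    by_cases hbot : ∃ j, S j = ⊥
    · obtain ⟨j, hj⟩ := hbot
      have hz : ∀ f ∈ U₀, eval ![(p j).1, (p j).2] f = 0 := fun f hf => by
        have := hev j f hf
        rw [hj] at this
        simpa using this
      have hLj : eval ![(p j).1, (p j).2] ℓ = 0 := by
        have h1 := hz _ (hx₁ ℓ hℓU)
        have h2 := hz _ (hx₂ ℓ hℓU)
        rw [eval_mul, eval_X] at h1 h2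
        simp only [Matrix.cons_val_zero, Matrix.cons_val_one, Matrix.head_cons] at h1 h2
        rcases mul_eq_zero.mp h1 with h | h
        · rcases mul_eq_zero.mp h2 with h' | h'
          · exact absurd ⟨h, h'⟩ (hpne j)
          · exact h'
        · exact h
      have hStop : ∀ i, i ≠ j → S i = ⊤ := by
        intro i hij
        have hLi : eval ![(p i).1, (p i).2] ℓ ≠ 0 := by
          intro hcon
          exact hℓ0 (lin_zero hℓhom (hcross i j hij) hcon hLj)
        rcases not_and_or.mp (hpne i) with h | h
        · refine top_of_mem (hev i _ (hx₁ ℓ hℓU)) ?_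
          rw [eval_mul, eval_X]
          simp only [Matrix.cons_val_zero]
          exact mul_ne_zero h hLi
        · refine top_of_mem (hev i _ (hx₂ ℓ hℓU)) ?_
          rw [eval_mul, eval_X]
          simp only [Matrix.cons_val_one, Matrix.head_cons]
          exact mul_ne_zero h hLi
      obtain ⟨i, k, hij, hkj, hik⟩ : ∃ i k : Fin 4, i ≠ j ∧ k ≠ j ∧ i ≠ k := by
        fin_cases j <;> decide
      have h2 : Module.finrank ℂ U₀ ≤ 2 := bound2 i k j hik hij hkj hz
      have hsum : ∑ i', Module.finrank ℂ (S i') = 3 := by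
        have hite : ∀ i', Module.finrank ℂ (S i') = if i' = j then 0 else 1 := by
          intro i'
          by_cases h : i' = j
          · rw [h, hj, if_pos rfl, finrank_bot]
          · rw [hStop i' h, if_neg h, finrank_top, Module.finrank_self]
        rw [Fin.sum_univ_four, hite 0, hite 1, hite 2, hite 3]
        fin_cases j <;> decide
      omega
    · push_neg at hbot
      have hStop : ∀ i, S i = ⊤ := fun i => by
        rcases (Submodule.ne_bot_iff _).mp (hbot i) with ⟨x, hx, hx0⟩
        exact top_of_mem hx hx0
      have hsum : ∑ i', Module.finrank ℂ (S i') = 4 := by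
        rw [Fin.sum_univ_four, hStop 0, hStop 1, hStop 2, hStop 3]
        simp only [finrank_top, Module.finrank_self]
      have h3 := bound3 0 1 2 (by decide) (by decide) (by decide)
      omega
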